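/- Let ȳ and y be complex numbers, i ≠ j indices, and define the complex n×n matrix Y_{ij} = (ȳ + y) e_i e_iᵀ − y e_i e_jᵀ. Then for every v ∈ ℂⁿ, tr(H_q(Y_{ij}) · X Xᵀ) = Im(v_i · conj((ȳ + y) v_i − y v_j)); that is, the trace of H_q(Y_{ij}) against W = X Xᵀ equals the reactive power flow on line (i,j). -/

import Mathlib

open Matrix

/-- The stacked real/imaginary part vector `X = [Re v; Im v]` of a complex vector `v`. -/
noncomputable def stackX {n : ℕ} (v : Fin n → ℂ) : Fin n ⊕ Fin n → ℝ :=
  Sum.elim (fun i => (v i).re) (fun i => (v i).im)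

/-- The real block matrix
`H_q(A) = (−1/2) [[Im(A + Aᵀ), Re(A − Aᵀ)], [Re(Aᵀ − A), Im(A + Aᵀ)]]`. -/
noncomputable def Hq {n : ℕ} (A : Matrix (Fin n) (Fin n) ℂ) :
    Matrix (Fin n ⊕ Fin n) (Fin n ⊕ Fin n) ℝ :=
  (-(1 : ℝ) / 2) • Matrix.fromBlocks
    ((A + Aᵀ).map Complex.im) ((A - Aᵀ).map Complex.re)
    ((Aᵀ - A).map Complex.re) ((A + Aᵀ).map Complex.im)

lemma sym_sum {n : ℕ} (F G : Fin n → Fin n → ℝ)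
    (h : ∀ x l, F x l + F l x = G x l + G l x) :
    ∑ x : Fin n, ∑ l : Fin n, F x l = ∑ x : Fin n, ∑ l : Fin n, G x l := by
  have h1 : ∑ x : Fin n, ∑ l : Fin n, (F x l + F l x)
      = ∑ x : Fin n, ∑ l : Fin n, (G x l + G l x) :=
    Finset.sum_congr rfl fun x _ => Finset.sum_congr rfl fun l _ => h x l
  have h2 : ∑ x : Fin n, ∑ l : Fin n, F l x = ∑ x : Fin n, ∑ l : Fin n, F x l :=
    Finset.sum_comm
  have h3 : ∑ x : Fin n, ∑ l : Fin n, G l x = ∑ x : Fin n, ∑ l : Fin n, G x l :=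
    Finset.sum_comm
  simp only [Finset.sum_add_distrib, h2, h3] at h1
  linarith

lemma key_trace_Hq {n : ℕ} (A : Matrix (Fin n) (Fin n) ℂ) (v : Fin n → ℂ) :
    (Hq A * vecMulVec (stackX v) (stackX v)).trace
      = -(star v ⬝ᵥ A.mulVec v).im := by
  rw [vecMulVec_eq (Fin 1), ← Matrix.mul_assoc, trace_mul_comm, ← Matrix.mul_assoc]
  simp only [Matrix.trace, Matrix.diag, Matrix.mul_apply, dotProduct, Matrix.mulVec,
    Hq, stackX, Fintype.sum_sum_type, Sum.elim_inl, Sum.elim_inr, fromBlocks_apply₁₁,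
    fromBlocks_apply₁₂, fromBlocks_apply₂₁, fromBlocks_apply₂₂, Matrix.smul_apply,
    Matrix.map_apply, Matrix.add_apply, Matrix.sub_apply, Matrix.transpose_apply,
    Pi.star_apply, Complex.mul_im, Complex.mul_re, Complex.star_def, Complex.conj_re,
    Complex.conj_im, replicateCol_apply, replicateRow_apply, smul_eq_mul, Finset.mul_sum, Finset.sum_mul,
    Finset.univ_unique, Finset.sum_const, Finset.card_singleton, one_smul,
    Complex.add_im, Complex.add_re, Complex.sub_im, Complex.sub_re,
    Complex.im_sum, neg_mul, mul_neg, ← Finset.sum_add_distrib, ← Finset.sum_neg_distrib,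
    add_mul]
  apply sym_sum
  intro x l
  ring

/-- with `Y_{ij} = (ȳ + y) e_i e_iᵀ − y e_i e_jᵀ` and `i ≠ j`,
`tr(H_q(Y_{ij}) · X Xᵀ) = Im(v_i ⋅ conj((ȳ + y) v_i − y v_j))`,
the reactive power flow on line `(i,j)`. -/
theorem trace_Hq_lineflow {n : ℕ} (ybar y : ℂ) (i j : Fin n) (hij : i ≠ j)
    (Yij : Matrix (Fin n) (Fin n) ℂ)
    (hYij : Yij = (ybar + y) • vecMulVec (Pi.single i (1 : ℂ)) (Pi.single i (1 : ℂ))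
      - y • vecMulVec (Pi.single i (1 : ℂ)) (Pi.single j (1 : ℂ)))
    (v : Fin n → ℂ) :
    (Hq Yij * vecMulVec (stackX v) (stackX v)).trace
      = (v i * starRingEnd ℂ ((ybar + y) * v i - y * v j)).im := by
  rw [key_trace_Hq, hYij]
  simp only [dotProduct, Matrix.mulVec, Matrix.sub_apply, Matrix.smul_apply,
    vecMulVec_apply, Pi.single_apply, smul_eq_mul, Pi.star_apply, Complex.star_def]
  simp only [mul_ite, ite_mul, mul_one, mul_zero, one_mul, zero_mul, sub_mul, mul_sub,
    Finset.sum_ite_eq', Finset.mem_univ, if_true, Finset.sum_sub_distrib,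
    Finset.sum_ite_eq, Complex.im_sum]
  simp [Complex.mul_im, Complex.sub_im, Complex.sub_re, Complex.mul_re, Complex.conj_re,
    Complex.conj_im, Complex.add_re, Complex.add_im]
  ring
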